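/- If there exist an OA(2, k, k) and a resolvable Steiner system S(2, k, n), then there exists a mixed Steiner system MS(2, k, Z_2^{(k−1)n} × Z_{n+1}). -/

import Mathlib

open Finset

namespace MS15

lemma zmod2 (a : ZMod 2) : a = 0 ∨ a = 1 := by revert a; decide

lemma dist_supp {ι : Type*} [Fintype ι] [DecidableEq ι] (f g : ι → ZMod 2) :
    hammingDist f g =
      ((univ.filter fun i => f i ≠ 0) \ (univ.filter fun i => g i ≠ 0)).card +
      ((univ.filter fun i => g i ≠ 0) \ (univ.filter fun i => f i ≠ 0)).card := by
  rw [hammingDist, ← Finset.card_union_of_disjoint disjoint_sdiff_sdiff]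
  congr 1
  ext i
  simp only [Finset.mem_filter, Finset.mem_union, Finset.mem_sdiff, Finset.mem_univ, true_and]
  rcases zmod2 (f i) with h | h <;> rcases zmod2 (g i) with h' | h' <;> simp [h, h']

variable (n k : ℕ)

/-- decode a binary coordinate into a cell (symbol, point), symbol < k-1 -/
def dec (x : Fin ((k - 1) * n)) : Fin k × Fin n :=
  (⟨((finProdFinEquiv.symm x : Fin (k-1) × Fin n)).1.val,
    lt_of_lt_of_le ((finProdFinEquiv.symm x : Fin (k-1) × Fin n)).1.2 (Nat.sub_le k 1)⟩,
   ((finProdFinEquiv.symm x : Fin (k-1) × Fin n)).2)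

lemma dec_inj : Function.Injective (dec n k) := by
  intro a b h
  have h1 : (finProdFinEquiv.symm a : Fin (k-1) × Fin n) = finProdFinEquiv.symm b := by
    have e1 := congrArg (fun c => ((c.1 : Fin k) : ℕ)) h
    have e2 := congrArg Prod.snd h
    exact Prod.ext (Fin.ext e1) e2
  exact finProdFinEquiv.symm.injective h1

lemma dec_lt (x : Fin ((k-1)*n)) : ((dec n k x).1 : ℕ) < k - 1 :=
  ((finProdFinEquiv.symm x : Fin (k-1) × Fin n)).1.2

lemma dec_surj (c : Fin k × Fin n) (h : (c.1 : ℕ) < k - 1) : ∃ x, dec n k x = c := by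
  refine ⟨finProdFinEquiv (⟨(c.1 : ℕ), h⟩, c.2), ?_⟩
  unfold dec
  simp only [Equiv.symm_apply_apply]

/-- the nonzero element of `ZMod (n+1)` associated to point `i` -/
def zpt (i : Fin n) : ZMod (n + 1) := ((i : ℕ) + 1 : ℕ)

lemma zpt_ne_zero (i : Fin n) : zpt n i ≠ 0 := by
  have : ((i : ℕ) + 1 : ℕ) < n + 1 := by omega
  intro h
  have := (ZMod.natCast_eq_zero_iff _ _).mp h
  have := Nat.le_of_dvd (by omega) this
  omega

lemma zpt_inj : Function.Injective (zpt n) := by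
  intro i j h
  have hi : ((i : ℕ) + 1 : ℕ) < n + 1 := by omega
  have hj : ((j : ℕ) + 1 : ℕ) < n + 1 := by omega
  have := congrArg ZMod.val h
  rw [zpt, zpt, ZMod.val_cast_of_lt hi, ZMod.val_cast_of_lt hj] at this
  exact Fin.ext (by omega)


/-- the `Z_{n+1}` coordinate value of a cell set -/
def zOf (F : Finset (Fin k × Fin n)) : ZMod (n + 1) :=
  ∑ c ∈ F.filter (fun c => (c.1 : ℕ) = k - 1), zpt n c.2

/-- the word of a cell set -/
def wd (F : Finset (Fin k × Fin n)) : (Fin ((k - 1) * n) → ZMod 2) × ZMod (n + 1) :=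
  (fun x => if dec n k x ∈ F then 1 else 0, zOf n k F)

def GoodF (F : Finset (Fin k × Fin n)) : Prop :=
  F.card = k ∧ (F.filter (fun c => (c.1 : ℕ) = k - 1)).card ≤ 1

lemma supp_wd (F : Finset (Fin k × Fin n)) :
    (univ.filter fun t => (wd n k F).1 t ≠ 0) = univ.filter fun t => dec n k t ∈ F := by
  ext t
  by_cases h : dec n k t ∈ F <;> simp [wd, h]

lemma card_S (F : Finset (Fin k × Fin n)) :
    (univ.filter fun t => dec n k t ∈ F).card = (F.filter fun c => (c.1 : ℕ) ≠ k - 1).card := by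
  apply Finset.card_bij (fun t _ => dec n k t)
  · intro t ht
    simp only [Finset.mem_filter, Finset.mem_univ, true_and] at ht ⊢
    exact ⟨ht, Nat.ne_of_lt (dec_lt n k t)⟩
  · intro a ha b hb h
    exact dec_inj n k h
  · intro c hc
    simp only [Finset.mem_filter] at hc
    have hlt : (c.1 : ℕ) < k - 1 := by
      have := c.1.2
      omega
    obtain ⟨x, hx⟩ := dec_surj n k c hlt
    exact ⟨x, by simp [hx, hc.1], hx⟩

/-- membership of a last-symbol cell is detected by `zOf` -/
lemma last_mem_iff (F : Finset (Fin k × Fin n))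
    (hF : (F.filter (fun c => (c.1 : ℕ) = k - 1)).card ≤ 1)
    (s : Fin k) (i : Fin n) (hs : (s : ℕ) = k - 1) :
    (s, i) ∈ F ↔ zOf n k F = zpt n i := by
  constructor
  · intro h
    have hmem : (s, i) ∈ F.filter (fun c => (c.1 : ℕ) = k - 1) := by
      simp [h, hs]
    have : F.filter (fun c => (c.1 : ℕ) = k - 1) = {(s, i)} := by
      apply Finset.eq_singleton_iff_unique_mem.mpr
      refine ⟨hmem, fun y hy => ?_⟩
      by_contra hne
      have : 2 ≤ (F.filter (fun c => (c.1 : ℕ) = k - 1)).card :=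
        Finset.one_lt_card.mpr ⟨y, hy, (s, i), hmem, hne⟩
      omega
    rw [zOf, this, Finset.sum_singleton]
  · intro h
    rcases Finset.eq_empty_or_nonempty (F.filter (fun c => (c.1 : ℕ) = k - 1)) with he | ⟨c, hc⟩
    · rw [zOf, he, Finset.sum_empty] at h
      exact absurd h.symm (zpt_ne_zero n i)
    · have hsing : F.filter (fun c => (c.1 : ℕ) = k - 1) = {c} := by
        apply Finset.eq_singleton_iff_unique_mem.mpr
        refine ⟨hc, fun y hy => ?_⟩
        by_contra hne
        have : 2 ≤ (F.filter (fun c => (c.1 : ℕ) = k - 1)).card :=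
          Finset.one_lt_card.mpr ⟨y, hy, c, hc, hne⟩
        omega
      rw [zOf, hsing, Finset.sum_singleton] at h
      have hc2 : c.2 = i := zpt_inj n h
      simp only [Finset.mem_filter] at hc
      have hc1 : c.1 = s := Fin.ext (by rw [hc.2, hs])
      have : c = (s, i) := Prod.ext hc1 hc2
      rw [← this]; exact hc.1

/-- if no last-symbol cell, `zOf = 0` -/
lemma zOf_eq_zero_iff (F : Finset (Fin k × Fin n))
    (hF : (F.filter (fun c => (c.1 : ℕ) = k - 1)).card ≤ 1) :
    zOf n k F = 0 ↔ (F.filter (fun c => (c.1 : ℕ) = k - 1)) = ∅ := by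
  constructor
  · intro h
    rcases Finset.eq_empty_or_nonempty (F.filter (fun c => (c.1 : ℕ) = k - 1)) with he | ⟨c, hc⟩
    · exact he
    · exfalso
      have hsing : F.filter (fun c => (c.1 : ℕ) = k - 1) = {c} := by
        apply Finset.eq_singleton_iff_unique_mem.mpr
        refine ⟨hc, fun y hy => ?_⟩
        by_contra hne
        have : 2 ≤ (F.filter (fun c => (c.1 : ℕ) = k - 1)).card :=
          Finset.one_lt_card.mpr ⟨y, hy, c, hc, hne⟩
        omega
      rw [zOf, hsing, Finset.sum_singleton] at h
      exact zpt_ne_zero n c.2 h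
  · intro h
    rw [zOf, h, Finset.sum_empty]

/-- weight of a good codeword is `k` -/
lemma weight_wd (F : Finset (Fin k × Fin n)) (hF : GoodF n k F) :
    hammingNorm (wd n k F).1 + (if (wd n k F).2 = 0 then 0 else 1) = k := by
  obtain ⟨hcard, hfil⟩ := hF
  have h1 : hammingNorm (wd n k F).1 = (F.filter fun c => (c.1 : ℕ) ≠ k - 1).card := by
    rw [hammingNorm]
    rw [show ({x | (wd n k F).1 x ≠ 0} : Finset _) = univ.filter fun t => (wd n k F).1 t ≠ 0
      from rfl, supp_wd, card_S]
  have hsplit : (F.filter fun c => (c.1 : ℕ) ≠ k - 1).card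
      + (F.filter fun c => (c.1 : ℕ) = k - 1).card = k := by
    have h2 := Finset.card_filter_add_card_filter_not
      (s := F) (p := fun c => (c.1 : ℕ) = k - 1)
    simp only [ne_eq]
    omega
  rw [h1]
  by_cases hz : (wd n k F).2 = 0
  · have := (zOf_eq_zero_iff n k F hfil).mp hz
    rw [this] at hsplit
    simp only [hz, if_pos]
    simpa using hsplit
  · have hne : (F.filter (fun c => (c.1 : ℕ) = k - 1)) ≠ ∅ := by
      intro h
      exact hz ((zOf_eq_zero_iff n k F hfil).mpr h)
    have hpos : 0 < (F.filter (fun c => (c.1 : ℕ) = k - 1)).card :=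
      Finset.card_pos.mpr (Finset.nonempty_iff_ne_empty.mpr hne)
    rw [if_neg hz]
    omega


lemma filter_last_single (F : Finset (Fin k × Fin n))
    (hF : (F.filter (fun c => (c.1 : ℕ) = k - 1)).card ≤ 1)
    {c : Fin k × Fin n} (hc : c ∈ F.filter (fun c => (c.1 : ℕ) = k - 1)) :
    zOf n k F = zpt n c.2 := by
  have hsing : F.filter (fun c => (c.1 : ℕ) = k - 1) = {c} := by
    apply Finset.eq_singleton_iff_unique_mem.mpr
    refine ⟨hc, fun y hy => ?_⟩
    by_contra hne
    have : 2 ≤ (F.filter (fun c => (c.1 : ℕ) = k - 1)).card :=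
      Finset.one_lt_card.mpr ⟨y, hy, c, hc, hne⟩
    omega
  rw [zOf, hsing, Finset.sum_singleton]

lemma cardS_add (F : Finset (Fin k × Fin n)) (hF : GoodF n k F) :
    (univ.filter fun t => dec n k t ∈ F).card
      + (F.filter fun c => (c.1 : ℕ) = k - 1).card = k := by
  rw [card_S]
  have h2 := Finset.card_filter_add_card_filter_not
    (s := F) (p := fun c => (c.1 : ℕ) = k - 1)
  have := hF.1
  simp only [ne_eq]
  omega

lemma pair_inter {α : Type*} [DecidableEq α] (t1 t2 : α) (hne : t1 ≠ t2) (S : Finset α) :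
    (({t1, t2} : Finset α) ∩ S).card = 2 ↔ t1 ∈ S ∧ t2 ∈ S := by
  constructor
  · intro h
    have hsub : ({t1, t2} : Finset α) ∩ S ⊆ {t1, t2} := Finset.inter_subset_left
    have hcard : ({t1, t2} : Finset α).card = 2 := Finset.card_pair hne
    have heq := Finset.eq_of_subset_of_card_le hsub (by omega)
    constructor
    · have h1 : t1 ∈ ({t1, t2} : Finset α) ∩ S := by rw [heq]; simp
      exact (Finset.mem_inter.mp h1).2
    · have h1 : t2 ∈ ({t1, t2} : Finset α) ∩ S := by rw [heq]; simp
      exact (Finset.mem_inter.mp h1).2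
  · intro ⟨h1, h2⟩
    rw [Finset.inter_eq_left.mpr (by intro x hx; simp at hx; rcases hx with h|h <;> subst h <;>
      assumption)]
    exact Finset.card_pair hne

lemma single_inter {α : Type*} [DecidableEq α] (t1 : α) (S : Finset α) :
    (({t1} : Finset α) ∩ S).card = 1 ↔ t1 ∈ S := by
  constructor
  · intro h
    have hsub : ({t1} : Finset α) ∩ S ⊆ {t1} := Finset.inter_subset_left
    have heq := Finset.eq_of_subset_of_card_le hsub (by simp [h])
    have h1 : t1 ∈ ({t1} : Finset α) ∩ S := by rw [heq]; simp
    exact (Finset.mem_inter.mp h1).2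
  · intro h
    rw [Finset.inter_eq_left.mpr (by simpa using h)]
    simp

/-- distance from a word to a codeword, two-binary-cells case -/
lemma cover1 (hk : 2 ≤ k) (F : Finset (Fin k × Fin n)) (hF : GoodF n k F)
    (x : (Fin ((k - 1) * n) → ZMod 2) × ZMod (n + 1)) (hx2 : x.2 = 0)
    (t1 t2 : Fin ((k - 1) * n)) (hne : t1 ≠ t2)
    (hsupp : univ.filter (fun t => x.1 t ≠ 0) = {t1, t2}) :
    (hammingDist x.1 (wd n k F).1 + (if x.2 = (wd n k F).2 then 0 else 1) = k - 2) ↔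
      (dec n k t1 ∈ F ∧ dec n k t2 ∈ F) := by
  have hdist := dist_supp x.1 (wd n k F).1
  rw [supp_wd, hsupp] at hdist
  set SF := univ.filter (fun t => dec n k t ∈ F) with hSF
  set w := (({t1, t2} : Finset _) ∩ SF).card with hw
  have e1 : (({t1, t2} : Finset _) \ SF).card + w = 2 := by
    rw [hw, Finset.card_sdiff_add_card_inter]
    exact Finset.card_pair hne
  have e2 : (SF \ ({t1, t2} : Finset _)).card + w = SF.card := by
    rw [hw, Finset.inter_comm, Finset.card_sdiff_add_card_inter]
  have e3 : SF.card + (F.filter fun c => (c.1 : ℕ) = k - 1).card = k := cardS_add n k F hF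
  have hlam : (F.filter fun c => (c.1 : ℕ) = k - 1).card ≤ 1 := hF.2
  have hmem : (dec n k t1 ∈ F ∧ dec n k t2 ∈ F) ↔ w = 2 := by
    rw [hw, pair_inter t1 t2 hne]
    simp [hSF]
  have hite : (if x.2 = (wd n k F).2 then 0 else 1)
      = (F.filter fun c => (c.1 : ℕ) = k - 1).card := by
    rw [hx2]
    by_cases hz : (wd n k F).2 = 0
    · rw [if_pos hz.symm]
      have := (zOf_eq_zero_iff n k F hlam).mp hz
      rw [this]
      simp
    · rw [if_neg (fun h => hz h.symm)]
      have hne' : (F.filter (fun c => (c.1 : ℕ) = k - 1)) ≠ ∅ := by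
        intro h
        exact hz ((zOf_eq_zero_iff n k F hlam).mpr h)
      have hpos : 0 < (F.filter (fun c => (c.1 : ℕ) = k - 1)).card :=
        Finset.card_pos.mpr (Finset.nonempty_iff_ne_empty.mpr hne')
      omega
  rw [hdist, hite, hmem]
  omega

/-- distance from a word to a codeword, binary cell + Z cell case -/
lemma cover2 (hk : 2 ≤ k) (F : Finset (Fin k × Fin n)) (hF : GoodF n k F)
    (x : (Fin ((k - 1) * n) → ZMod 2) × ZMod (n + 1)) (p : Fin n) (hx2 : x.2 = zpt n p)
    (t1 : Fin ((k - 1) * n))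
    (hsupp : univ.filter (fun t => x.1 t ≠ 0) = {t1}) :
    (hammingDist x.1 (wd n k F).1 + (if x.2 = (wd n k F).2 then 0 else 1) = k - 2) ↔
      (dec n k t1 ∈ F ∧ (⟨k - 1, by omega⟩, p) ∈ F) := by
  have hdist := dist_supp x.1 (wd n k F).1
  rw [supp_wd, hsupp] at hdist
  set SF := univ.filter (fun t => dec n k t ∈ F) with hSF
  set w := (({t1} : Finset _) ∩ SF).card with hw
  have e1 : (({t1} : Finset _) \ SF).card + w = 1 := by
    rw [hw, Finset.card_sdiff_add_card_inter]
    simp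
  have e2 : (SF \ ({t1} : Finset _)).card + w = SF.card := by
    rw [hw, Finset.inter_comm, Finset.card_sdiff_add_card_inter]
  have e3 : SF.card + (F.filter fun c => (c.1 : ℕ) = k - 1).card = k := cardS_add n k F hF
  have hlam : (F.filter fun c => (c.1 : ℕ) = k - 1).card ≤ 1 := hF.2
  have hw1 : w ≤ 1 := by
    rw [hw]
    calc (({t1} : Finset _) ∩ SF).card ≤ ({t1} : Finset _).card :=
          Finset.card_le_card Finset.inter_subset_left
      _ = 1 := by simp
  have hmem1 : dec n k t1 ∈ F ↔ w = 1 := by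
    rw [hw, single_inter]
    simp [hSF]
  have hmem2 : ((⟨k - 1, by omega⟩ : Fin k), p) ∈ F ↔ zOf n k F = zpt n p :=
    last_mem_iff n k F hlam _ p rfl
  by_cases hz : zOf n k F = zpt n p
  · have hzn : zOf n k F ≠ 0 := hz ▸ zpt_ne_zero n p
    have hne' : (F.filter (fun c => (c.1 : ℕ) = k - 1)) ≠ ∅ := by
      intro h
      exact hzn ((zOf_eq_zero_iff n k F hlam).mpr h)
    have hpos : 0 < (F.filter (fun c => (c.1 : ℕ) = k - 1)).card :=
      Finset.card_pos.mpr (Finset.nonempty_iff_ne_empty.mpr hne')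
    have hite : (if x.2 = (wd n k F).2 then 0 else 1) = 0 := by
      rw [if_pos]
      rw [hx2]
      exact hz.symm
    rw [hdist, hite, hmem1]
    have : (((⟨k - 1, by omega⟩ : Fin k), p) ∈ F) := hmem2.mpr hz
    simp only [this, and_true]
    omega
  · have hite : (if x.2 = (wd n k F).2 then 0 else 1) = 1 := by
      rw [if_neg]
      rw [hx2]
      intro h
      exact hz h.symm
    rw [hdist, hite]
    have h2 : ¬ (((⟨k - 1, by omega⟩ : Fin k), p) ∈ F) := fun h => hz (hmem2.mp h)
    simp only [h2, and_false, iff_false]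
    omega

/-- minimum distance between two distinct good codewords with small intersection -/
lemma min_dist (hk : 2 ≤ k) (F1 F2 : Finset (Fin k × Fin n))
    (h1 : GoodF n k F1) (h2 : GoodF n k F2) (hint : (F1 ∩ F2).card ≤ 1) :
    2 * (k - 2) + 1 ≤
      hammingDist (wd n k F1).1 (wd n k F2).1 +
        (if (wd n k F1).2 = (wd n k F2).2 then 0 else 1) := by
  have hdist := dist_supp (wd n k F1).1 (wd n k F2).1
  rw [supp_wd, supp_wd] at hdist
  set S1 := univ.filter (fun t => dec n k t ∈ F1) with hS1
  set S2 := univ.filter (fun t => dec n k t ∈ F2) with hS2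
  set w := (S1 ∩ S2).card with hw
  have e1 : (S1 \ S2).card + w = S1.card := Finset.card_sdiff_add_card_inter _ _
  have e2 : (S2 \ S1).card + w = S2.card := by
    rw [hw, Finset.inter_comm, Finset.card_sdiff_add_card_inter]
  have e3 : S1.card + (F1.filter fun c => (c.1 : ℕ) = k - 1).card = k := cardS_add n k F1 h1
  have e4 : S2.card + (F2.filter fun c => (c.1 : ℕ) = k - 1).card = k := cardS_add n k F2 h2
  have hl1 : (F1.filter fun c => (c.1 : ℕ) = k - 1).card ≤ 1 := h1.2
  have hl2 : (F2.filter fun c => (c.1 : ℕ) = k - 1).card ≤ 1 := h2.2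
  have hwle : w ≤ (F1 ∩ F2).card := by
    rw [hw]
    apply Finset.card_le_card_of_injOn (fun t => dec n k t)
    · intro t ht
      simp only [hS1, hS2, Finset.mem_inter, Finset.mem_filter, Finset.mem_univ, true_and,
        Finset.mem_coe] at ht ⊢
      exact ht
    · intro a _ b _ h
      exact dec_inj n k h
  by_cases hz : (wd n k F1).2 = (wd n k F2).2
  · rw [if_pos hz]
    by_cases hl : (F1.filter fun c => (c.1 : ℕ) = k - 1) = ∅
    · -- both have no last cell
      have hz1 : zOf n k F1 = 0 := (zOf_eq_zero_iff n k F1 hl1).mpr hl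
      have hz2 : zOf n k F2 = 0 := by
        have : (wd n k F2).2 = 0 := by rw [← hz]; exact hz1
        exact this
      have hl' : (F2.filter fun c => (c.1 : ℕ) = k - 1) = ∅ :=
        (zOf_eq_zero_iff n k F2 hl2).mp hz2
      rw [hl] at e3
      rw [hl'] at e4
      simp only [Finset.card_empty, add_zero] at e3 e4
      omega
    · -- both have a last cell, and they are equal
      obtain ⟨c1l, hc1l⟩ := Finset.nonempty_iff_ne_empty.mpr hl
      have hz1 : zOf n k F1 = zpt n c1l.2 := filter_last_single n k F1 hl1 hc1l
      have hz2 : zOf n k F2 = zpt n c1l.2 := by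
        have : (wd n k F2).2 = zpt n c1l.2 := by rw [← hz]; exact hz1
        exact this
      have hmemF2 : c1l ∈ F2 := by
        have hc1l' := Finset.mem_filter.mp hc1l
        have : (c1l.1, c1l.2) ∈ F2 ↔ zOf n k F2 = zpt n c1l.2 :=
          last_mem_iff n k F2 hl2 c1l.1 c1l.2 hc1l'.2
        exact (by simpa using this.mpr hz2)
      have hmemF1 : c1l ∈ F1 := (Finset.mem_filter.mp hc1l).1
      -- w = 0
      have hw0 : w = 0 := by
        have hsub : w ≤ ((F1 ∩ F2).erase c1l).card := by
          rw [hw]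
          apply Finset.card_le_card_of_injOn (fun t => dec n k t)
          · intro t ht
            simp only [hS1, hS2, Finset.mem_inter, Finset.mem_filter, Finset.mem_univ,
              true_and, Finset.mem_coe] at ht
            rw [Finset.mem_coe, Finset.mem_erase]
            refine ⟨?_, Finset.mem_inter.mpr ⟨ht.1, ht.2⟩⟩
            intro hcontra
            simp only at hcontra
            have := dec_lt n k t
            rw [hcontra] at this
            have := (Finset.mem_filter.mp hc1l).2
            omega
          · intro a _ b _ h
            exact dec_inj n k h
        have : ((F1 ∩ F2).erase c1l).card = (F1 ∩ F2).card - 1 :=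
          Finset.card_erase_of_mem (Finset.mem_inter.mpr ⟨hmemF1, hmemF2⟩)
        omega
      have hp1 : 0 < (F1.filter fun c => (c.1 : ℕ) = k - 1).card :=
        Finset.card_pos.mpr ⟨c1l, hc1l⟩
      have hp2 : 0 < (F2.filter fun c => (c.1 : ℕ) = k - 1).card := by
        apply Finset.card_pos.mpr
        refine ⟨c1l, Finset.mem_filter.mpr ⟨hmemF2, (Finset.mem_filter.mp hc1l).2⟩⟩
      omega
  · rw [if_neg hz]
    omega


/-- normalize an OA so that row `r0` is constant with value `k-1` -/
lemma normOA (hk : 2 ≤ k) (A : Fin (k ^ 2) → Fin k → Fin k)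
    (hA : ∀ j₁ j₂ : Fin k, j₁ ≠ j₂ → ∀ a b : Fin k, ∃! r, A r j₁ = a ∧ A r j₂ = b) :
    ∃ A' : Fin (k ^ 2) → Fin k → Fin k, ∃ r0 : Fin (k ^ 2),
      (∀ j, (A' r0 j : ℕ) = k - 1) ∧
      (∀ j₁ j₂ : Fin k, j₁ ≠ j₂ → ∀ a b : Fin k, ∃! r, A' r j₁ = a ∧ A' r j₂ = b) := by
  have hpos : 0 < k ^ 2 := by positivity
  refine ⟨fun r j => Equiv.swap (A ⟨0, hpos⟩ j) ⟨k - 1, by omega⟩ (A r j), ⟨0, hpos⟩, ?_, ?_⟩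
  · intro j
    simp [Equiv.swap_apply_left]
  · intro j₁ j₂ hj a b
    obtain ⟨r, hr, hu⟩ := hA j₁ j₂ hj
      ((Equiv.swap (A ⟨0, hpos⟩ j₁) ⟨k - 1, by omega⟩).symm a)
      ((Equiv.swap (A ⟨0, hpos⟩ j₂) ⟨k - 1, by omega⟩).symm b)
    refine ⟨r, ⟨?_, ?_⟩, ?_⟩
    · simp only [hr.1, Equiv.apply_symm_apply]
    · simp only [hr.2, Equiv.apply_symm_apply]
    · rintro r' ⟨h1', h2'⟩
      simp only [] at h1' h2'
      apply hu
      refine ⟨?_, ?_⟩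
      · rw [← h1', Equiv.symm_apply_apply]
      · rw [← h2', Equiv.symm_apply_apply]

variable (A : Fin (k ^ 2) → Fin k → Fin k) (r0 : Fin (k ^ 2))
  (B : Finset (Finset (Fin n))) (hBk : ∀ b ∈ B, b.card = k)

/-- the codeword cell sets -/
def CW (F : Finset (Fin k × Fin n)) : Prop :=
  (∃ i : Fin n, F = univ.image fun s : Fin k => (s, i)) ∨
  (∃ (b : Finset (Fin n)) (hb : b ∈ B) (r : Fin (k ^ 2)), r ≠ r0 ∧
    F = univ.image fun j : Fin k => (A r j, (b.orderIsoOfFin (hBk b hb) j : Fin n)))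

lemma CW_good (hk : 2 ≤ k)
    (hA0 : ∀ j, (A r0 j : ℕ) = k - 1)
    (hA : ∀ j₁ j₂ : Fin k, j₁ ≠ j₂ → ∀ a b : Fin k, ∃! r, A r j₁ = a ∧ A r j₂ = b)
    (F : Finset (Fin k × Fin n)) (hF : CW n k A r0 B hBk F) : GoodF n k F := by
  rcases hF with ⟨i, rfl⟩ | ⟨b, hb, r, hr0, rfl⟩
  · constructor
    · rw [Finset.card_image_of_injective _ (fun s s' h => (Prod.ext_iff.mp h).1), Finset.card_univ,
        Fintype.card_fin]
    · apply Finset.card_le_one.mpr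
      rintro ⟨s, i'⟩ h1 ⟨s', i''⟩ h2
      simp only [Finset.mem_filter, Finset.mem_image, Finset.mem_univ, true_and,
        Prod.mk.injEq] at h1 h2
      obtain ⟨⟨u, hu1, hu2⟩, hl1⟩ := h1
      obtain ⟨⟨u', hu1', hu2'⟩, hl2⟩ := h2
      have : s = s' := Fin.ext (by rw [hl1, hl2])
      rw [this, ← hu2, ← hu2']
  · have hinj : Function.Injective
        (fun j : Fin k => (A r j, (b.orderIsoOfFin (hBk b hb) j : Fin n))) := by
      intro j j' h
      have := (Prod.ext_iff.mp h).2
      exact (b.orderIsoOfFin (hBk b hb)).injective (Subtype.coe_injective this)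
    constructor
    · rw [Finset.card_image_of_injective _ hinj, Finset.card_univ, Fintype.card_fin]
    · apply Finset.card_le_one.mpr
      rintro c h1 c' h2
      simp only [Finset.mem_filter, Finset.mem_image, Finset.mem_univ, true_and] at h1 h2
      obtain ⟨⟨j, hj⟩, hl1⟩ := h1
      obtain ⟨⟨j', hj'⟩, hl2⟩ := h2
      by_cases hjj : j = j'
      · rw [← hj, ← hj', hjj]
      · exfalso
        apply hr0
        have e1 : A r j = A r0 j := Fin.ext (by
          have : ((A r j : ℕ)) = (c.1 : ℕ) := by rw [← hj]
          rw [this, hl1, hA0 j])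
        have e2 : A r j' = A r0 j' := Fin.ext (by
          have : ((A r j' : ℕ)) = (c'.1 : ℕ) := by rw [← hj']
          rw [this, hl2, hA0 j'])
        obtain ⟨rr, hrr, hrru⟩ := hA j j' hjj (A r0 j) (A r0 j')
        have ha1 := hrru r ⟨e1, e2⟩
        have ha2 := hrru r0 ⟨rfl, rfl⟩
        rw [ha1, ha2]

lemma pair_cover (hk : 2 ≤ k)
    (hA0 : ∀ j, (A r0 j : ℕ) = k - 1)
    (hA : ∀ j₁ j₂ : Fin k, j₁ ≠ j₂ → ∀ a b : Fin k, ∃! r, A r j₁ = a ∧ A r j₂ = b)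
    (hB2 : ∀ s : Finset (Fin n), s.card = 2 → ∃! b, b ∈ B ∧ s ⊆ b)
    (c1 c2 : Fin k × Fin n) (hne : c1 ≠ c2) (hnl : ¬((c1.1 : ℕ) = k - 1 ∧ (c2.1 : ℕ) = k - 1)) :
    ∃! F, CW n k A r0 B hBk F ∧ c1 ∈ F ∧ c2 ∈ F := by
  by_cases hp : c1.2 = c2.2
  · -- same point: the point codeword
    refine ⟨univ.image fun s : Fin k => (s, c1.2), ⟨Or.inl ⟨c1.2, rfl⟩, ?_, ?_⟩, ?_⟩
    · exact Finset.mem_image.mpr ⟨c1.1, Finset.mem_univ _, rfl⟩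
    · exact Finset.mem_image.mpr ⟨c2.1, Finset.mem_univ _, by rw [hp]⟩
    · rintro F ⟨hCW, hm1, hm2⟩
      rcases hCW with ⟨i, rfl⟩ | ⟨b, hb, r, hr0, rfl⟩
      · obtain ⟨s, _, hs⟩ := Finset.mem_image.mp hm1
        have : i = c1.2 := congrArg Prod.snd hs
        rw [this]
      · exfalso
        obtain ⟨j1, _, hj1⟩ := Finset.mem_image.mp hm1
        obtain ⟨j2, _, hj2⟩ := Finset.mem_image.mp hm2
        have hσ : ((b.orderIsoOfFin (hBk b hb)) j1 : Fin n)
            = ((b.orderIsoOfFin (hBk b hb)) j2 : Fin n) := by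
          rw [show ((b.orderIsoOfFin (hBk b hb)) j1 : Fin n) = c1.2 from congrArg Prod.snd hj1,
            show ((b.orderIsoOfFin (hBk b hb)) j2 : Fin n) = c2.2 from congrArg Prod.snd hj2, hp]
        have hj12 : j1 = j2 :=
          (b.orderIsoOfFin (hBk b hb)).injective (Subtype.coe_injective hσ)
        apply hne
        rw [← hj1, ← hj2, hj12]
  · -- distinct points: find the Steiner block and the OA row
    have hcard : ({c1.2, c2.2} : Finset (Fin n)).card = 2 := Finset.card_pair hp
    obtain ⟨b, ⟨hbB, hbsub⟩, hbu⟩ := hB2 _ hcard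
    have h1b : c1.2 ∈ b := hbsub (by simp)
    have h2b : c2.2 ∈ b := hbsub (by simp)
    set σ := b.orderIsoOfFin (hBk b hbB) with hσdef
    set j1 := σ.symm ⟨c1.2, h1b⟩ with hj1def
    set j2 := σ.symm ⟨c2.2, h2b⟩ with hj2def
    have hσ1 : (σ j1 : Fin n) = c1.2 := by rw [hj1def, OrderIso.apply_symm_apply]
    have hσ2 : (σ j2 : Fin n) = c2.2 := by rw [hj2def, OrderIso.apply_symm_apply]
    have hj12 : j1 ≠ j2 := by
      intro h
      apply hp
      rw [← hσ1, ← hσ2, h]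
    obtain ⟨r, ⟨hr1, hr2⟩, hru⟩ := hA j1 j2 hj12 c1.1 c2.1
    have hrr0 : r ≠ r0 := by
      intro h
      apply hnl
      constructor
      · rw [← hr1, h]; exact hA0 j1
      · rw [← hr2, h]; exact hA0 j2
    refine ⟨univ.image fun j : Fin k => (A r j, (σ j : Fin n)),
      ⟨Or.inr ⟨b, hbB, r, hrr0, rfl⟩, ?_, ?_⟩, ?_⟩
    · exact Finset.mem_image.mpr ⟨j1, Finset.mem_univ _, by rw [hr1, hσ1]⟩
    · exact Finset.mem_image.mpr ⟨j2, Finset.mem_univ _, by rw [hr2, hσ2]⟩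
    · rintro F ⟨hCW, hm1, hm2⟩
      rcases hCW with ⟨i, rfl⟩ | ⟨b', hb', r', hr0', rfl⟩
      · exfalso
        obtain ⟨s, _, hs⟩ := Finset.mem_image.mp hm1
        obtain ⟨s', _, hs'⟩ := Finset.mem_image.mp hm2
        apply hp
        rw [← show i = c1.2 from congrArg Prod.snd hs, ← show i = c2.2 from congrArg Prod.snd hs']
      · obtain ⟨j1', _, hj1'⟩ := Finset.mem_image.mp hm1
        obtain ⟨j2', _, hj2'⟩ := Finset.mem_image.mp hm2
        have hib1 : c1.2 ∈ b' := by
          rw [← show ((b'.orderIsoOfFin (hBk b' hb')) j1' : Fin n) = c1.2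
            from congrArg Prod.snd hj1']
          exact ((b'.orderIsoOfFin (hBk b' hb')) j1').2
        have hib2 : c2.2 ∈ b' := by
          rw [← show ((b'.orderIsoOfFin (hBk b' hb')) j2' : Fin n) = c2.2
            from congrArg Prod.snd hj2']
          exact ((b'.orderIsoOfFin (hBk b' hb')) j2').2
        have hbb : b' = b := by
          apply hbu
          refine ⟨hb', ?_⟩
          intro x hx
          simp only [Finset.mem_insert, Finset.mem_singleton] at hx
          rcases hx with h | h <;> subst h <;> assumption
        subst hbb
        have hjj1 : j1' = j1 := by
          apply σ.injective
          apply Subtype.coe_injective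
          show (σ j1' : Fin n) = (σ j1 : Fin n)
          rw [hσ1]
          exact congrArg Prod.snd hj1'
        have hjj2 : j2' = j2 := by
          apply σ.injective
          apply Subtype.coe_injective
          show (σ j2' : Fin n) = (σ j2 : Fin n)
          rw [hσ2]
          exact congrArg Prod.snd hj2'
        have hrr : r' = r := by
          apply hru
          constructor
          · rw [← hjj1]
            exact congrArg Prod.fst hj1'
          · rw [← hjj2]
            exact congrArg Prod.fst hj2'
        rw [hrr]

lemma CW_inter (hk : 2 ≤ k)
    (hA0 : ∀ j, (A r0 j : ℕ) = k - 1)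
    (hA : ∀ j₁ j₂ : Fin k, j₁ ≠ j₂ → ∀ a b : Fin k, ∃! r, A r j₁ = a ∧ A r j₂ = b)
    (hB2 : ∀ s : Finset (Fin n), s.card = 2 → ∃! b, b ∈ B ∧ s ⊆ b)
    (F1 F2 : Finset (Fin k × Fin n)) (hF1 : CW n k A r0 B hBk F1) (hF2 : CW n k A r0 B hBk F2)
    (hne : F1 ≠ F2) : (F1 ∩ F2).card ≤ 1 := by
  by_contra h
  push_neg at h
  obtain ⟨a, ha, b, hb, hab⟩ := Finset.one_lt_card.mp h
  have haF : a ∈ F1 ∧ a ∈ F2 := Finset.mem_inter.mp ha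
  have hbF : b ∈ F1 ∧ b ∈ F2 := Finset.mem_inter.mp hb
  have hnl : ¬((a.1 : ℕ) = k - 1 ∧ (b.1 : ℕ) = k - 1) := by
    rintro ⟨h1, h2⟩
    have hg := CW_good n k A r0 B hBk hk hA0 hA F1 hF1
    have ha' : a ∈ F1.filter (fun c => (c.1 : ℕ) = k - 1) := Finset.mem_filter.mpr ⟨haF.1, h1⟩
    have hb' : b ∈ F1.filter (fun c => (c.1 : ℕ) = k - 1) := Finset.mem_filter.mpr ⟨hbF.1, h2⟩
    have : 2 ≤ (F1.filter (fun c => (c.1 : ℕ) = k - 1)).card :=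
      Finset.one_lt_card.mpr ⟨a, ha', b, hb', hab⟩
    have := hg.2
    omega
  obtain ⟨F, _, hu⟩ := pair_cover n k A r0 B hBk hk hA0 hA hB2 a b hab hnl
  have e1 : F1 = F := hu F1 ⟨hF1, haF.1, hbF.1⟩
  have e2 : F2 = F := hu F2 ⟨hF2, haF.2, hbF.2⟩
  exact hne (e1.trans e2.symm)

end MS15

/-- If there exist an `OA(2, k, k)` and a resolvable Steiner system `S(2, k, n)`, then
there exists a mixed Steiner system `MS(2, k, Z₂^{(k-1)n} × Z_{n+1})`: a set of weight-`k`
words over `Z₂^{(k-1)n} × Z_{n+1}` such that every weight-2 word is within Hamming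
distance `k - 2` of exactly one codeword and the minimum Hamming distance is at
least `2(k-2)+1`. -/
theorem stmt15 (n k : ℕ) (hk : 2 ≤ k)
    (hOA : ∃ A : Fin (k ^ 2) → Fin k → Fin k,
      ∀ j₁ j₂ : Fin k, j₁ ≠ j₂ → ∀ a b : Fin k, ∃! r, A r j₁ = a ∧ A r j₂ = b)
    (hRes : ∃ (B : Finset (Finset (Fin n))) (P : Finset (Finset (Finset (Fin n)))),
      (∀ b ∈ B, b.card = k) ∧
      (∀ s : Finset (Fin n), s.card = 2 → ∃! b, b ∈ B ∧ s ⊆ b) ∧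
      (∀ c ∈ P, c ⊆ B) ∧
      (∀ c ∈ P, ∀ x : Fin n, ∃! b, b ∈ c ∧ x ∈ b) ∧
      (∀ b ∈ B, ∃! c, c ∈ P ∧ b ∈ c)) :
    ∃ C : Set ((Fin ((k - 1) * n) → ZMod 2) × ZMod (n + 1)),
      (∀ c ∈ C, hammingNorm c.1 + (if c.2 = 0 then 0 else 1) = k) ∧
      (∀ x : (Fin ((k - 1) * n) → ZMod 2) × ZMod (n + 1),
        hammingNorm x.1 + (if x.2 = 0 then 0 else 1) = 2 →
        ∃! c, c ∈ C ∧ hammingDist x.1 c.1 + (if x.2 = c.2 then 0 else 1) = k - 2) ∧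
      (∀ c₁ ∈ C, ∀ c₂ ∈ C, c₁ ≠ c₂ →
        2 * (k - 2) + 1 ≤ hammingDist c₁.1 c₂.1 + (if c₁.2 = c₂.2 then 0 else 1)) := by
  classical
  obtain ⟨A0, hA0'⟩ := hOA
  obtain ⟨B, P, hBk, hB2, -, -, -⟩ := hRes
  obtain ⟨A, r0, hA0, hA⟩ := MS15.normOA k hk A0 hA0'
  have hgood : ∀ F, MS15.CW n k A r0 B hBk F → MS15.GoodF n k F :=
    fun F hF => MS15.CW_good n k A r0 B hBk hk hA0 hA F hF
  refine ⟨{w | ∃ F, MS15.CW n k A r0 B hBk F ∧ w = MS15.wd n k F}, ?_, ?_, ?_⟩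
  · rintro c ⟨F, hF, rfl⟩
    exact MS15.weight_wd n k F (hgood F hF)
  · intro x hx
    have hnorm : hammingNorm x.1 = (Finset.univ.filter fun t => x.1 t ≠ 0).card := rfl
    by_cases hz : x.2 = 0
    · rw [if_pos hz] at hx
      have hc2 : (Finset.univ.filter fun t => x.1 t ≠ 0).card = 2 := by
        rw [← hnorm]; omega
      obtain ⟨t1, t2, hne, hS⟩ := Finset.card_eq_two.mp hc2
      have hnea : MS15.dec n k t1 ≠ MS15.dec n k t2 := fun h => hne (MS15.dec_inj n k h)
      have hnl : ¬(((MS15.dec n k t1).1 : ℕ) = k - 1 ∧ ((MS15.dec n k t2).1 : ℕ) = k - 1) := by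
        rintro ⟨h1, -⟩
        have := MS15.dec_lt n k t1
        omega
      obtain ⟨F0, ⟨hCW0, hm1, hm2⟩, hu⟩ :=
        MS15.pair_cover n k A r0 B hBk hk hA0 hA hB2 _ _ hnea hnl
      refine ⟨MS15.wd n k F0, ⟨⟨F0, hCW0, rfl⟩, ?_⟩, ?_⟩
      · exact (MS15.cover1 n k hk F0 (hgood F0 hCW0) x hz t1 t2 hne hS).mpr ⟨hm1, hm2⟩
      · rintro c ⟨⟨F, hCW, rfl⟩, hdist⟩
        have hmm := (MS15.cover1 n k hk F (hgood F hCW) x hz t1 t2 hne hS).mp hdist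
        rw [hu F ⟨hCW, hmm.1, hmm.2⟩]
    · rw [if_neg hz] at hx
      have hc1 : (Finset.univ.filter fun t => x.1 t ≠ 0).card = 1 := by
        rw [← hnorm]; omega
      obtain ⟨t1, hS⟩ := Finset.card_eq_one.mp hc1
      have hvlt : x.2.val < n + 1 := ZMod.val_lt x.2
      have hv0 : x.2.val ≠ 0 := fun h => hz ((ZMod.val_eq_zero x.2).mp h)
      set p : Fin n := ⟨x.2.val - 1, by omega⟩ with hp
      have hzp : x.2 = MS15.zpt n p := by
        rw [MS15.zpt]
        have h1 : (p : ℕ) + 1 = x.2.val := by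
          simp only [hp]
          omega
        rw [h1]
        exact (ZMod.natCast_rightInverse x.2).symm
      have hnea : MS15.dec n k t1 ≠ ((⟨k - 1, by omega⟩ : Fin k), p) := by
        intro h
        have h1 := congrArg (fun c => ((c.1 : Fin k) : ℕ)) h
        have := MS15.dec_lt n k t1
        simp only at h1
        omega
      have hnl : ¬(((MS15.dec n k t1).1 : ℕ) = k - 1 ∧
          ((((⟨k - 1, by omega⟩ : Fin k), p) : Fin k × Fin n).1 : ℕ) = k - 1) := by
        rintro ⟨h1, -⟩
        have := MS15.dec_lt n k t1
        omega
      obtain ⟨F0, ⟨hCW0, hm1, hm2⟩, hu⟩ :=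
        MS15.pair_cover n k A r0 B hBk hk hA0 hA hB2 _ _ hnea hnl
      refine ⟨MS15.wd n k F0, ⟨⟨F0, hCW0, rfl⟩, ?_⟩, ?_⟩
      · exact (MS15.cover2 n k hk F0 (hgood F0 hCW0) x p hzp t1 hS).mpr ⟨hm1, hm2⟩
      · rintro c ⟨⟨F, hCW, rfl⟩, hdist⟩
        have hmm := (MS15.cover2 n k hk F (hgood F hCW) x p hzp t1 hS).mp hdist
        rw [hu F ⟨hCW, hmm.1, hmm.2⟩]
  · rintro c1 ⟨F1, hF1, rfl⟩ c2 ⟨F2, hF2, rfl⟩ hne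
    have hFne : F1 ≠ F2 := fun h => hne (by rw [h])
    exact MS15.min_dist n k hk F1 F2 (hgood F1 hF1) (hgood F2 hF2)
      (MS15.CW_inter n k A r0 B hBk hk hA0 hA hB2 F1 F2 hF1 hF2 hFne)
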